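/- arXiv:1310.5292 — 2 statements merged into one kernel-verified Lean document; each statement's English description precedes it below -/
import Mathlib

section
/- Let G be a connected graph on n ≥ 2 vertices with transmissions 𝔻₁ ≥ ... ≥ 𝔻_n and diameter d. Then the distance signless Laplacian spectral radius satisfies ρ(𝔻ℚ(G)) ≤ (𝔻₁ + 2𝔻_i − d + √((2𝔻_i − 𝔻₁ + d)² + 8d·Σ_{k=1}^{i−1}(𝔻_k − 𝔻_i)))/2 for each 1 ≤ i ≤ n. -/
open Matrix Finset Real

/-- Spectral radius: largest modulus of a complex eigenvalue (root of the
characteristic polynomial). -/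
noncomputable def specRad {n : ℕ} (A : Matrix (Fin n) (Fin n) ℝ) : ℝ :=
  (((A.map (Complex.ofReal)).charpoly.roots).map (fun z => ‖z‖)).foldr max 0

/-- Irreducibility of a nonnegative matrix. -/
def Irred {n : ℕ} (A : Matrix (Fin n) (Fin n) ℝ) : Prop :=
  ∀ i j : Fin n, ∃ k : ℕ, 0 < (A ^ k) i j

private lemma foldr_max_le (s : Multiset ℝ) (θ : ℝ) (h0 : 0 ≤ θ)
    (h : ∀ r ∈ s, r ≤ θ) : s.foldr max 0 ≤ θ := by
  induction s using Multiset.induction with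
  | empty => simpa using h0
  | cons a s ih =>
    simp only [Multiset.foldr_cons]
    exact max_le (h a (Multiset.mem_cons_self a s))
      (ih fun r hr => h r (Multiset.mem_cons_of_mem hr))

private lemma eval_charpoly_eq {n : ℕ} (M : Matrix (Fin n) (Fin n) ℂ) (t : ℂ) :
    M.charpoly.eval t = ((t • (1 : Matrix (Fin n) (Fin n) ℂ)) - M).det := by
  rw [Matrix.charpoly, ← Polynomial.coe_evalRingHom, RingHom.map_det]
  congr 1
  ext i j
  by_cases h : i = j
  · subst h
    simp [Matrix.charmatrix_apply_eq, Matrix.one_apply_eq]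
  · simp [Matrix.charmatrix_apply_ne _ _ _ h, Matrix.one_apply_ne h]

/-- If `B` is entrywise nonnegative and `B z ≤ θ z` entrywise for a positive vector `z`,
then the spectral radius of `B` is at most `θ`. -/
private lemma specRad_le {n : ℕ} (B : Matrix (Fin n) (Fin n) ℝ) (θ : ℝ) (hθ : 0 ≤ θ)
    (hB : ∀ i j, 0 ≤ B i j) (z : Fin n → ℝ) (hz : ∀ i, 0 < z i)
    (hrow : ∀ u, ∑ j, B u j * z j ≤ θ * z u) : specRad B ≤ θ := by
  classical
  apply foldr_max_le _ _ hθ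
  intro r hr
  rw [Multiset.mem_map] at hr
  obtain ⟨t, ht, rfl⟩ := hr
  have hroot := Polynomial.isRoot_of_mem_roots ht
  have hdet : ((t • (1 : Matrix (Fin n) (Fin n) ℂ)) - B.map Complex.ofReal).det = 0 := by
    rw [← eval_charpoly_eq]; exact hroot
  obtain ⟨x, hx0, hx⟩ := Matrix.exists_mulVec_eq_zero_iff.mpr hdet
  have hBx : (B.map Complex.ofReal) *ᵥ x = t • x := by
    have h1 := sub_eq_zero.mp (by rw [← Matrix.sub_mulVec, hx] :
      (t • (1 : Matrix (Fin n) (Fin n) ℂ)) *ᵥ x - (B.map Complex.ofReal) *ᵥ x = 0)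
    rw [← h1, Matrix.smul_mulVec, Matrix.one_mulVec]
  obtain ⟨j₀, hj₀⟩ : ∃ j, x j ≠ 0 := by
    by_contra hcon
    push_neg at hcon
    exact hx0 (funext hcon)
  obtain ⟨u, -, hu⟩ := Finset.exists_max_image Finset.univ
    (fun j => ‖x j‖ / z j) ⟨j₀, Finset.mem_univ _⟩
  have hcu : 0 < ‖x u‖ / z u :=
    lt_of_lt_of_le (div_pos (by simpa using hj₀) (hz j₀)) (hu j₀ (Finset.mem_univ _))
  have hxu : 0 < ‖x u‖ := by
    have h := mul_pos hcu (hz u)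
    rwa [div_mul_cancel₀ _ (ne_of_gt (hz u))] at h
  have hbound : ∀ j, ‖x j‖ ≤ (‖x u‖ / z u) * z j := by
    intro j
    have := hu j (Finset.mem_univ _)
    rw [div_le_div_iff₀ (hz j) (hz u)] at this
    rw [div_mul_eq_mul_div, le_div_iff₀ (hz u)]
    linarith
  have hentry : ((B.map Complex.ofReal) *ᵥ x) u = ∑ j, ((B u j : ℝ) : ℂ) * x j := by
    simp [Matrix.mulVec, dotProduct, Matrix.map_apply]
  have hchain : ‖t‖ * ‖x u‖ ≤ θ * ‖x u‖ := by
    have h1 : ‖t‖ * ‖x u‖ = ‖∑ j, ((B u j : ℝ) : ℂ) * x j‖ := by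
      rw [← hentry, hBx]
      simp [Pi.smul_apply, smul_eq_mul, norm_mul]
    rw [h1]
    calc ‖∑ j, ((B u j : ℝ) : ℂ) * x j‖
        ≤ ∑ j, ‖((B u j : ℝ) : ℂ) * x j‖ := norm_sum_le _ _
      _ = ∑ j, B u j * ‖x j‖ := by
          apply Finset.sum_congr rfl
          intro j _
          rw [norm_mul, Complex.norm_real, Real.norm_of_nonneg (hB u j)]
      _ ≤ ∑ j, B u j * ((‖x u‖ / z u) * z j) := by
          apply Finset.sum_le_sum
          intro j _
          exact mul_le_mul_of_nonneg_left (hbound j) (hB u j)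
      _ = (‖x u‖ / z u) * ∑ j, B u j * z j := by
          rw [Finset.mul_sum]
          apply Finset.sum_congr rfl
          intro j _
          ring
      _ ≤ (‖x u‖ / z u) * (θ * z u) :=
          mul_le_mul_of_nonneg_left (hrow u) (le_of_lt hcu)
      _ = θ * ((‖x u‖ / z u) * z u) := by ring
      _ = θ * ‖x u‖ := by
          rw [div_mul_cancel₀ _ (ne_of_gt (hz u))]
  exact le_of_mul_le_mul_right (by linarith [hchain]) hxu

set_option maxHeartbeats 1000000 in
theorem stmt_16 {n : ℕ} (hn : 2 ≤ n) (G : SimpleGraph (Fin n)) (hconn : G.Connected)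
    (D : Fin n → ℝ) (hD : ∀ i, D i = ∑ j, (G.dist i j : ℝ))
    (hord : ∀ i j : Fin n, i ≤ j → D j ≤ D i)
    (d : ℕ) (hd : IsGreatest {k | ∃ i j : Fin n, k = G.dist i j} d) :
    ∀ i : Fin n,
      specRad (Matrix.diagonal D + Matrix.of fun i j : Fin n => (G.dist i j : ℝ)) ≤
        (D (⟨0, by omega⟩ : Fin n) + 2 * D i - (d : ℝ) +
          Real.sqrt ((2 * D i - D (⟨0, by omega⟩ : Fin n) + (d : ℝ)) ^ 2 +
            8 * (d : ℝ) * ∑ k ∈ Finset.Iio i, (D k - D i))) / 2 := by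
  classical
  intro i
  have hv0 : (0:ℕ) < n := by omega
  set v0 : Fin n := ⟨0, hv0⟩ with hv0def
  show specRad (Matrix.diagonal D + Matrix.of fun i j : Fin n => (G.dist i j : ℝ)) ≤
    (D v0 + 2 * D i - (d : ℝ) +
      Real.sqrt ((2 * D i - D v0 + (d : ℝ)) ^ 2 +
        8 * (d : ℝ) * ∑ k ∈ Finset.Iio i, (D k - D i))) / 2
  set B : Matrix (Fin n) (Fin n) ℝ :=
    Matrix.diagonal D + Matrix.of fun i j : Fin n => (G.dist i j : ℝ) with hBdef
  -- basic facts
  have hdnn : ∀ u w : Fin n, (0:ℝ) ≤ (G.dist u w : ℝ) := fun u w => Nat.cast_nonneg _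
  have hdle : ∀ u w : Fin n, (G.dist u w : ℝ) ≤ (d:ℝ) := fun u w =>
    Nat.cast_le.mpr (hd.2 ⟨u, w, rfl⟩)
  have hDnn : ∀ u, 0 ≤ D u := fun u => by
    rw [hD u]; exact Finset.sum_nonneg fun j _ => Nat.cast_nonneg _
  have hrowsum : ∀ u, ∑ w, (G.dist u w : ℝ) = D u := fun u => (hD u).symm
  have hDmax : ∀ u, D u ≤ D v0 := fun u => hord v0 u (Fin.le_def.mpr (Nat.zero_le _))
  have hd1 : (1:ℝ) ≤ (d:ℝ) := by
    have hne : (⟨0, by omega⟩ : Fin n) ≠ (⟨1, by omega⟩ : Fin n) := by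
      simp [Fin.ext_iff]
    have hpos := hconn.pos_dist_of_ne hne
    have hle : G.dist (⟨0, by omega⟩ : Fin n) (⟨1, by omega⟩ : Fin n) ≤ d :=
      hd.2 ⟨_, _, rfl⟩
    exact_mod_cast le_trans hpos hle
  have hBnn : ∀ a b : Fin n, 0 ≤ B a b := by
    intro a b
    rw [hBdef]
    simp only [Matrix.add_apply, Matrix.of_apply]
    by_cases hab : a = b
    · subst hab
      rw [Matrix.diagonal_apply_eq]
      exact add_nonneg (hDnn _) (hdnn _ _)
    · rw [Matrix.diagonal_apply_ne _ hab, zero_add]; exact hdnn a b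
  have hrowB : ∀ (z : Fin n → ℝ) (u : Fin n),
      ∑ j, B u j * z j = D u * z u + ∑ w, (G.dist u w : ℝ) * z w := by
    intro z u
    rw [hBdef]
    simp only [Matrix.add_apply, Matrix.of_apply, add_mul]
    rw [Finset.sum_add_distrib]
    congr 1
    rw [Finset.sum_eq_single u]
    · rw [Matrix.diagonal_apply_eq]
    · intro b _ hb
      rw [Matrix.diagonal_apply_ne _ (Ne.symm hb), zero_mul]
    · intro h; exact absurd (Finset.mem_univ u) h
  set S : ℝ := ∑ k ∈ Finset.Iio i, (D k - D i) with hSdef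
  have hSterm : ∀ k ∈ Finset.Iio i, 0 ≤ D k - D i := fun k hk =>
    sub_nonneg.mpr (hord k i (le_of_lt (Finset.mem_Iio.mp hk)))
  have hSnn : 0 ≤ S := Finset.sum_nonneg hSterm
  have hsum_max : ∑ w : Fin n, max (D w - D i) 0 = S := by
    rw [hSdef, ← Finset.sum_sdiff (Finset.subset_univ (Finset.Iio i))
      (f := fun w => max (D w - D i) 0)]
    have h1 : ∑ w ∈ Finset.univ \ Finset.Iio i, max (D w - D i) 0 = 0 := by
      apply Finset.sum_eq_zero
      intro w hw
      have hiw : i ≤ w := by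
        rcases Finset.mem_sdiff.mp hw with ⟨-, hw2⟩
        simpa [Finset.mem_Iio, not_lt] using hw2
      exact max_eq_right (sub_nonpos.mpr (hord i w hiw))
    have h2 : ∑ w ∈ Finset.Iio i, max (D w - D i) 0 = ∑ k ∈ Finset.Iio i, (D k - D i) :=
      Finset.sum_congr rfl fun k hk => max_eq_left (hSterm k hk)
    rw [h1, h2, zero_add]
  have hkey : ∀ u : Fin n, ∑ w, (G.dist u w : ℝ) * max (D w - D i) 0 ≤
      (d:ℝ) * (S - max (D u - D i) 0) := by
    intro u
    have hle : ∀ w ∈ Finset.univ, (G.dist u w : ℝ) * max (D w - D i) 0 ≤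
        (d:ℝ) * max (D w - D i) 0 - (if w = u then (d:ℝ) * max (D u - D i) 0 else 0) := by
      intro w _
      by_cases hwu : w = u
      · subst hwu
        simp [SimpleGraph.dist_self]
      · simp only [hwu, if_false, sub_zero]
        exact mul_le_mul_of_nonneg_right (hdle u w) (le_max_right _ _)
    calc ∑ w, (G.dist u w : ℝ) * max (D w - D i) 0
        ≤ ∑ w, ((d:ℝ) * max (D w - D i) 0 -
            (if w = u then (d:ℝ) * max (D u - D i) 0 else 0)) := Finset.sum_le_sum hle
      _ = (d:ℝ) * S - (d:ℝ) * max (D u - D i) 0 := by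
          rw [Finset.sum_sub_distrib, ← Finset.mul_sum, hsum_max,
            Finset.sum_ite_eq' Finset.univ u (fun _ => (d:ℝ) * max (D u - D i) 0)]
          simp
      _ = (d:ℝ) * (S - max (D u - D i) 0) := by ring
  rcases hSnn.eq_or_lt with hS0 | hSpos
  · -- degenerate case S = 0
    have hDi : D i = D v0 := by
      refine le_antisymm (hDmax i) ?_
      by_cases hi : v0 < i
      · have hmem : v0 ∈ Finset.Iio i := Finset.mem_Iio.mpr hi
        have hsingle := Finset.single_le_sum hSterm hmem
        have : D v0 - D i ≤ S := hsingle
        linarith [hS0.symm ▸ this]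
      · exact hord i v0 (not_lt.mp hi)
    have hsqrt : Real.sqrt ((2 * D i - D v0 + (d:ℝ)) ^ 2 + 8 * (d:ℝ) * S) = D v0 + d := by
      rw [← hS0, hDi]
      have he : (2 * D v0 - D v0 + (d:ℝ)) ^ 2 + 8 * (d:ℝ) * 0 = (D v0 + (d:ℝ))^2 := by ring
      rw [he, Real.sqrt_sq (by linarith [hDnn v0, hd1])]
    rw [hsqrt, hDi]
    have heq : (D v0 + 2 * D v0 - (d:ℝ) + (D v0 + (d:ℝ))) / 2 = 2 * D v0 := by ring
    rw [heq]
    apply specRad_le B _ (by linarith [hDnn v0]) hBnn (fun _ => 1) (fun _ => one_pos)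
    intro u
    rw [hrowB (fun _ => 1) u]
    simp only [mul_one]
    rw [hrowsum u]
    linarith [hDmax u]
  · -- main case S > 0
    have hdpos : (0:ℝ) < (d:ℝ) := by linarith
    have hdS : 0 < (d:ℝ) * S := mul_pos hdpos hSpos
    set R : ℝ := Real.sqrt ((2 * D i - D v0 + (d:ℝ)) ^ 2 + 8 * (d:ℝ) * S) with hRdef
    have hRnn : 0 ≤ R := Real.sqrt_nonneg _
    have hR2 : R ^ 2 = (2 * D i - D v0 + (d:ℝ)) ^ 2 + 8 * (d:ℝ) * S := by
      rw [hRdef]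
      exact Real.sq_sqrt (by positivity)
    set θ : ℝ := (D v0 + 2 * D i - (d:ℝ) + R) / 2 with hθdef
    show specRad B ≤ θ
    have hERlt : 2 * D i - D v0 + (d:ℝ) < R := by nlinarith [hR2, hRnn, hdS]
    have hθ2Di : 2 * D i < θ := by rw [hθdef]; linarith
    have hθnn : 0 ≤ θ := le_of_lt (lt_of_le_of_lt (by linarith [hDnn i]) hθ2Di)
    have hprod : (θ - 2 * D i) * (θ - D v0 + (d:ℝ)) = 2 * ((d:ℝ) * S) := by
      rw [hθdef]
      nlinarith [hR2]
    set γ : ℝ := (θ - 2 * D i) / ((d:ℝ) * S) with hγdef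
    have hγpos : 0 < γ := div_pos (by linarith) hdS
    have hγdS : γ * ((d:ℝ) * S) = θ - 2 * D i := div_mul_cancel₀ _ (ne_of_gt hdS)
    have hγ2 : γ * (θ - D v0 + (d:ℝ)) = 2 := by
      have hne : (d:ℝ) * S ≠ 0 := ne_of_gt hdS
      rw [hγdef]
      field_simp
      linarith [hprod]
    clear_value R θ γ
    apply specRad_le B θ hθnn hBnn (fun w => 1 + γ * max (D w - D i) 0)
      (fun w => add_pos_of_pos_of_nonneg one_pos
        (mul_nonneg (le_of_lt hγpos) (le_max_right _ _)))
    intro u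
    rw [hrowB (fun w => 1 + γ * max (D w - D i) 0) u]
    have hsplit : ∑ w, (G.dist u w : ℝ) * (1 + γ * max (D w - D i) 0) =
        D u + γ * ∑ w, (G.dist u w : ℝ) * max (D w - D i) 0 := by
      simp only [mul_add, mul_one]
      rw [Finset.sum_add_distrib, hrowsum u, Finset.mul_sum]
      congr 1
      apply Finset.sum_congr rfl
      intro w _
      ring
    rw [hsplit]
    have hkeyu := mul_le_mul_of_nonneg_left (hkey u) (le_of_lt hγpos)
    have hpnn : (0:ℝ) ≤ max (D u - D i) 0 := le_max_right _ _
    rcases le_total (D u) (D i) with hui | hui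
    · have hp0 : max (D u - D i) 0 = 0 := max_eq_right (by linarith)
      rw [hp0] at hkeyu ⊢
      nlinarith [hγdS, hkeyu]
    · have hp : max (D u - D i) 0 = D u - D i := max_eq_left (by linarith)
      rw [hp] at hkeyu ⊢
      have hkey2 : 2 ≤ γ * (θ - D u + (d:ℝ)) := by
        nlinarith [hγ2, mul_nonneg (le_of_lt hγpos) (sub_nonneg.mpr (hDmax u))]
      nlinarith [hγdS, hkeyu,
        mul_nonneg (sub_nonneg.mpr hui) (by linarith [hkey2] : (0:ℝ) ≤ γ * (θ - D u + (d:ℝ)) - 2)]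
end

section
/- Let G be a connected graph on n ≥ 2 vertices with transmissions 𝔻₁ ≥ ... ≥ 𝔻_n. Then ρ(𝔻ℚ(G)) ≥ (3𝔻_n − 1 + √((𝔻_n + 1)² + 8·Σ_{k=1}^{n−1}(𝔻_k − 𝔻_n)))/2. -/
open Matrix Finset Real

lemma le_foldr_max (s : Multiset ℝ) {a : ℝ} (h : a ∈ s) : a ≤ s.foldr max 0 := by
  induction s using Multiset.induction with
  | empty => simp at h
  | cons b t ih =>
    rw [Multiset.foldr_cons]
    rcases Multiset.mem_cons.1 h with rfl | h
    · exact le_max_left _ _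
    · exact (ih h).trans (le_max_right _ _)

lemma eigenvalue_le_specRad {n : ℕ} {A : Matrix (Fin n) (Fin n) ℝ} (hA : A.IsHermitian)
    (i : Fin n) : hA.eigenvalues i ≤ specRad A := by
  set μ := hA.eigenvalues i with hμ
  have hvec := hA.mulVec_eigenvectorBasis i
  have hwne : (⇑(hA.eigenvectorBasis i) : Fin n → ℝ) ≠ 0 := by
    intro h
    have h1 := hA.eigenvectorBasis.orthonormal.1 i
    have h2 : hA.eigenvectorBasis i = 0 := by
      ext j; exact congrFun h j
    rw [h2, norm_zero] at h1; norm_num at h1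
  have hdet : Polynomial.eval μ A.charpoly = 0 := by
    have h0 : (Matrix.scalar (Fin n) μ - A).det = 0 := by
      rw [← Matrix.exists_mulVec_eq_zero_iff]
      refine ⟨_, hwne, ?_⟩
      rw [Matrix.sub_mulVec, hvec]
      funext j
      simp [Matrix.scalar_apply, Matrix.mulVec_diagonal, hμ]
    rw [Matrix.charpoly, eval_det, Matrix.matPolyEquiv_charmatrix]
    simpa using h0
  have hC : ((A.map Complex.ofReal).charpoly) = A.charpoly.map Complex.ofRealHom :=
    Matrix.charpoly_map A Complex.ofRealHom
  have hroot : (μ : ℂ) ∈ (A.map Complex.ofReal).charpoly.roots := by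
    rw [hC, Polynomial.mem_roots ((A.charpoly_monic.map Complex.ofRealHom).ne_zero)]
    show Polynomial.IsRoot _ _
    rw [Polynomial.IsRoot, Polynomial.eval_map,
      show ((μ:ℂ)) = Complex.ofRealHom μ from rfl, Polynomial.eval₂_at_apply, hdet]
    simp
  have habs : ‖(μ : ℂ)‖ ∈
      ((A.map Complex.ofReal).charpoly.roots).map (fun z => ‖z‖) :=
    Multiset.mem_map_of_mem _ hroot
  calc μ ≤ |μ| := le_abs_self μ
    _ = ‖(μ : ℂ)‖ := by rw [Complex.norm_real, Real.norm_eq_abs]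
    _ ≤ specRad A := le_foldr_max _ habs

lemma rayleigh_le {n : ℕ} (hn : 0 < n) {A : Matrix (Fin n) (Fin n) ℝ} (hA : A.IsHermitian)
    (v : Fin n → ℝ) : ∃ i, v ⬝ᵥ (A *ᵥ v) ≤ hA.eigenvalues i * (v ⬝ᵥ v) := by
  obtain ⟨i, -, hi⟩ := Finset.exists_max_image Finset.univ hA.eigenvalues
    ⟨⟨0, hn⟩, Finset.mem_univ _⟩
  refine ⟨i, ?_⟩
  set U : Matrix (Fin n) (Fin n) ℝ := (hA.eigenvectorUnitary : Matrix (Fin n) (Fin n) ℝ) with hU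
  have hstar : star U = Uᵀ := by
    ext a b; simp [hU, Matrix.star_apply]
  have hUU : U * Uᵀ = 1 := by
    rw [← hstar]; exact (Matrix.mem_unitaryGroup_iff).mp hA.eigenvectorUnitary.2
  set x : Fin n → ℝ := Uᵀ *ᵥ v with hx
  have hxv : v ᵥ* U = x := (Matrix.mulVec_transpose U v).symm
  have hdiag : Matrix.diagonal ((RCLike.ofReal : ℝ → ℝ) ∘ hA.eigenvalues)
      = Matrix.diagonal hA.eigenvalues := by
    congr 1
  have hAv : A *ᵥ v = U *ᵥ (Matrix.diagonal hA.eigenvalues *ᵥ x) := by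
    conv_lhs => rw [hA.spectral_theorem, Unitary.conjStarAlgAut_apply]
    rw [← hU, hstar, hdiag, Matrix.mulVec_mulVec, Matrix.mulVec_mulVec]
  have hQ : v ⬝ᵥ (A *ᵥ v) = ∑ j, hA.eigenvalues j * x j ^ 2 := by
    rw [hAv, Matrix.dotProduct_mulVec, hxv, dotProduct]
    refine Finset.sum_congr rfl fun j _ => ?_
    rw [Matrix.mulVec_diagonal]; ring
  have hnorm : ∑ j, x j ^ 2 = v ⬝ᵥ v := by
    have h1 : ∑ j, x j ^ 2 = x ⬝ᵥ x := by
      rw [dotProduct]; exact Finset.sum_congr rfl fun j _ => (sq (x j)) ▸ rfl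
    rw [h1, hx]
    nth_rewrite 1 [Matrix.mulVec_transpose]
    rw [← Matrix.dotProduct_mulVec, Matrix.mulVec_mulVec, hUU, Matrix.one_mulVec]
  have hle : ∑ j, hA.eigenvalues j * x j ^ 2 ≤ hA.eigenvalues i * ∑ j, x j ^ 2 := by
    rw [Finset.mul_sum]
    exact Finset.sum_le_sum fun j _ =>
      mul_le_mul_of_nonneg_right (hi j (Finset.mem_univ j)) (sq_nonneg _)
  rw [hQ, ← hnorm]; exact hle

theorem stmt_17 {n : ℕ} (hn : 2 ≤ n) (G : SimpleGraph (Fin n)) (hconn : G.Connected)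
    (D : Fin n → ℝ) (hD : ∀ i, D i = ∑ j, (G.dist i j : ℝ))
    (hord : ∀ i j : Fin n, i ≤ j → D j ≤ D i) :
    specRad (Matrix.diagonal D + Matrix.of fun i j : Fin n => (G.dist i j : ℝ)) ≥
      (3 * D ⟨n - 1, by omega⟩ - 1 +
        Real.sqrt ((D ⟨n - 1, by omega⟩ + 1) ^ 2 +
          8 * ∑ k ∈ Finset.Iio (⟨n - 1, by omega⟩ : Fin n),
            (D k - D ⟨n - 1, by omega⟩))) / 2 := by
  have hn0 : (0:ℝ) < n := by positivity
  set last : Fin n := ⟨n - 1, by omega⟩ with hlast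
  set M := Matrix.diagonal D + Matrix.of fun i j : Fin n => (G.dist i j : ℝ) with hM
  set T : ℝ := ∑ i, D i with hT
  set m : ℝ := D last with hm
  -- symmetry
  have hMsym : M.IsHermitian := by
    unfold Matrix.IsHermitian
    ext i j
    simp only [hM, Matrix.conjTranspose_apply, Matrix.add_apply, Matrix.of_apply, star_trivial,
      Matrix.diagonal_apply]
    by_cases h : i = j
    · subst h; rfl
    · rw [if_neg h, if_neg (Ne.symm h), SimpleGraph.dist_comm]
  -- row sums
  have hrow : ∀ i, ∑ j, M i j = 2 * D i := by
    intro i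
    simp only [hM, Matrix.add_apply, Matrix.of_apply, Matrix.diagonal_apply]
    rw [Finset.sum_add_distrib, Finset.sum_ite_eq Finset.univ i (fun _ => D i)]
    rw [if_pos (Finset.mem_univ i), ← hD i]; ring
  -- Rayleigh with all-ones vector
  set v : Fin n → ℝ := fun _ => (1:ℝ) with hv
  obtain ⟨i, hray⟩ := rayleigh_le (by omega) hMsym v
  set μ := hMsym.eigenvalues i with hμ
  have hQ : v ⬝ᵥ (M *ᵥ v) = 2 * T := by
    calc v ⬝ᵥ (M *ᵥ v) = ∑ x, ∑ j, M x j := by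
          simp [hv, dotProduct, Matrix.mulVec]
      _ = ∑ x, 2 * D x := Finset.sum_congr rfl fun x _ => hrow x
      _ = 2 * T := by rw [hT]; exact (Finset.mul_sum Finset.univ D 2).symm
  have hvv : v ⬝ᵥ v = (n:ℝ) := by
    simp [hv, dotProduct]
  have hμn : 2 * T ≤ μ * n := by rw [← hQ, ← hvv]; exact hray
  have hspec : μ ≤ specRad M := eigenvalue_le_specRad hMsym i
  -- m is the minimum transmission
  have hmin : ∀ j, m ≤ D j := by
    intro j
    refine hord j last ?_
    have := j.2
    rw [Fin.le_def]
    simp only [hlast]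
    omega
  have hTm : (n:ℝ) * m ≤ T := by
    rw [hT]
    calc (n:ℝ) * m = ∑ _j : Fin n, m := by
          rw [Finset.sum_const, Finset.card_univ, Fintype.card_fin, nsmul_eq_mul]
      _ ≤ ∑ j, D j := Finset.sum_le_sum fun j _ => hmin j
  -- m ≥ n - 1
  have hm1 : (n:ℝ) - 1 ≤ m := by
    have hsub : Finset.univ.erase last ⊆ Finset.univ := Finset.erase_subset _ _
    have h1 : ∀ j ∈ Finset.univ.erase last, (1:ℝ) ≤ (G.dist last j : ℝ) := by
      intro j hj
      have hne : last ≠ j := Ne.symm (Finset.mem_erase.mp hj).1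
      have := hconn.pos_dist_of_ne (u := last) (v := j) hne
      exact_mod_cast this
    calc (n:ℝ) - 1 = ∑ _j ∈ Finset.univ.erase last, (1:ℝ) := by
          rw [Finset.sum_const, Finset.card_erase_of_mem (Finset.mem_univ _),
            Finset.card_univ, Fintype.card_fin, nsmul_eq_mul, mul_one]
          push_cast [Nat.cast_sub (by omega : 1 ≤ n)]
          ring
      _ ≤ ∑ j ∈ Finset.univ.erase last, (G.dist last j : ℝ) := Finset.sum_le_sum h1
      _ ≤ ∑ j, (G.dist last j : ℝ) :=
          Finset.sum_le_sum_of_subset_of_nonneg hsub (fun j _ _ => by positivity)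
      _ = m := (hD last).symm
  -- the sum over Iio last
  have hS : ∑ k ∈ Finset.Iio last, (D k - m) = T - n * m := by
    have he : Finset.Iio last = Finset.univ.erase last := by
      ext k
      have := k.2
      simp only [Finset.mem_Iio, Finset.mem_erase, Finset.mem_univ, and_true, Fin.lt_def,
        Fin.ne_iff_vne, hlast]
      omega
    rw [he, Finset.sum_erase _ (by rw [← hm]; ring)]
    rw [Finset.sum_sub_distrib, Finset.sum_const, Finset.card_univ, Fintype.card_fin,
      nsmul_eq_mul, ← hT]
  -- algebra
  have hμ2m : 2 * m ≤ μ := by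
    have h1 : 0 ≤ (μ - 2 * m) * n := by nlinarith
    nlinarith
  have hmu1 : m + ((n:ℝ) - 1) ≤ μ := by linarith
  have h1m : (1:ℝ) ≤ m := by
    have : (2:ℝ) ≤ n := by exact_mod_cast hn
    linarith
  have hpos : (0:ℝ) ≤ 2 * μ - 3 * m + 1 := by linarith
  have hsq : (m + 1) ^ 2 + 8 * (T - n * m) ≤ (2 * μ - 3 * m + 1) ^ 2 := by
    nlinarith [mul_nonneg (by linarith : (0:ℝ) ≤ μ - 2 * m)
      (by linarith : (0:ℝ) ≤ μ - m + 1 - n), hμn]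
  have hsqrt : Real.sqrt ((m + 1) ^ 2 + 8 * (T - n * m)) ≤ 2 * μ - 3 * m + 1 :=
    calc Real.sqrt ((m + 1) ^ 2 + 8 * (T - n * m))
        ≤ Real.sqrt ((2 * μ - 3 * m + 1) ^ 2) := Real.sqrt_le_sqrt hsq
      _ = 2 * μ - 3 * m + 1 := Real.sqrt_sq hpos
  rw [ge_iff_le, hS]
  linarith
end
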